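/- arXiv:1203.3811 — 7 statements merged into one kernel-verified Lean document; each statement's English description precedes it below -/
import Mathlib

section
/- A finite simple graph G has an inherently convex Cayley configuration space if and only if G is 3-realizable. -/
/-- `f : V → ℝᵏ` is a realization of the graph `G` with edge-length assignment `d`:
every edge `{u,v}` of `G` is drawn with length `d {u,v}`. -/
def IsRealization {V : Type} (G : SimpleGraph V) (d : Sym2 V → ℝ)
    (k : ℕ) (f : V → EuclideanSpace ℝ (Fin k)) : Prop :=
  ∀ u v : V, G.Adj u v → dist (f u) (f v) = d s(u, v)

/-- The edge-length assignment `d` on `G` is Euclidean realizable: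
`(G, d)` has a realization in `ℝᵏ` for some `k ≥ 1`. -/
def EuclideanRealizable {V : Type} (G : SimpleGraph V) (d : Sym2 V → ℝ) : Prop :=
  ∃ k : ℕ, 1 ≤ k ∧ ∃ f : V → EuclideanSpace ℝ (Fin k), IsRealization G d k f

/-- `G` is `n`-realizable: every Euclidean realizable (nonnegative) edge-length
assignment of `G` has a realization in `ℝⁿ`. -/
def DRealizable {V : Type} (G : SimpleGraph V) (n : ℕ) : Prop :=
  ∀ d : Sym2 V → ℝ, (∀ e ∈ G.edgeSet, 0 ≤ d e) → EuclideanRealizable G d →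
    ∃ f : V → EuclideanSpace ℝ (Fin n), IsRealization G d n f

/-- The Cayley configuration space `Φ_H(G, F, d_F)`: the set of vectors `ℓ : H → ℝ` of
squared distances over the non-edges `H`, attained by realizations in `ℝ³` of the
distance constraint system `((V, F), d_F)`. -/
def CayleySpace {V : Type} (F H : Set (Sym2 V)) (dF : Sym2 V → ℝ) : Set (H → ℝ) :=
  { ℓ | ∃ f : V → EuclideanSpace ℝ (Fin 3),
      (∀ u v : V, s(u, v) ∈ F → dist (f u) (f v) = dF s(u, v)) ∧
      (∀ e : H, ∀ u v : V, (e : Sym2 V) = s(u, v) → ℓ e = dist (f u) (f v) ^ 2) }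

lemma dist_sq_eq' {n : ℕ} (x y : EuclideanSpace ℝ (Fin n)) :
    dist x y ^ 2 = ∑ i, (x i - y i) ^ 2 := by
  rw [EuclideanSpace.dist_eq, Real.sq_sqrt (by positivity)]
  simp [Real.dist_eq, sq_abs]

lemma eq_of_sq_eq' {x y : ℝ} (hx : 0 ≤ x) (hy : 0 ≤ y) (h : x ^ 2 = y ^ 2) : x = y := by
  rw [← Real.sqrt_sq hx, ← Real.sqrt_sq hy, h]

/-- A finite simple graph `G` has an inherently convex Cayley configuration
space (i.e. `Φ_H(G, F, d_F)` is convex for every partition `E = F ∪ H` of its edge set and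
every nonnegative edge-length assignment `d_F` on `F`) if and only if `G` is 3-realizable. -/
theorem inherentlyConvex_iff_threeRealizable {V : Type} [Fintype V] (G : SimpleGraph V) :
    (∀ F H : Set (Sym2 V), F ∪ H = G.edgeSet → Disjoint F H →
      ∀ dF : Sym2 V → ℝ, (∀ e ∈ F, 0 ≤ dF e) →
        Convex ℝ (CayleySpace F H dF)) ↔ DRealizable G 3 := by
  constructor
  · -- convexity ⇒ 3-realizable
    rintro hconv d hd ⟨k, hk, f, hf⟩
    have hk0 : (k : ℝ) ≠ 0 := Nat.cast_ne_zero.mpr (by omega)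
    have hc : Convex ℝ (CayleySpace (∅ : Set (Sym2 V)) G.edgeSet (0 : Sym2 V → ℝ)) :=
      hconv ∅ G.edgeSet (by simp) (by simp) 0 (by simp)
    -- one-dimensional realizations, scaled by √k
    set z : Fin k → (↥G.edgeSet → ℝ) := fun i e =>
      (k : ℝ) * Sym2.lift ⟨fun u v => (f u i - f v i) ^ 2, fun u v => by ring⟩ (e : Sym2 V) with hz
    have hzmem : ∀ i : Fin k, z i ∈ CayleySpace (∅ : Set (Sym2 V)) G.edgeSet (0 : Sym2 V → ℝ) := by
      intro i
      refine ⟨fun w => (WithLp.toLp 2 ![Real.sqrt k * f w i, 0, 0] : EuclideanSpace ℝ (Fin 3)), by simp, ?_⟩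
      rintro e u v hev
      rw [hz]
      simp only [hev, Sym2.lift_mk]
      rw [dist_sq_eq']
      simp only [PiLp.toLp_apply, Fin.sum_univ_succ, Finset.univ_eq_empty, Finset.sum_empty,
        Matrix.cons_val_zero, Matrix.cons_val_succ, Fin.succ_zero_eq_one, Fin.succ_one_eq_two]
      have : (0:ℝ) ≤ (k:ℝ) := Nat.cast_nonneg k
      ring_nf
      rw [Real.sq_sqrt this]
      ring
    have hsum : (∑ i : Fin k, ((k : ℝ)⁻¹) • z i) ∈
        CayleySpace (∅ : Set (Sym2 V)) G.edgeSet (0 : Sym2 V → ℝ) := by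
      refine hc.sum_mem (fun i _ => by positivity) ?_ (fun i _ => hzmem i)
      simp [Finset.sum_const, hk0]
    obtain ⟨g, -, hg⟩ := hsum
    refine ⟨g, fun u v huv => ?_⟩
    have he : s(u, v) ∈ G.edgeSet := G.mem_edgeSet.mpr huv
    have h1 := hg ⟨s(u, v), he⟩ u v rfl
    have h2 : (∑ i : Fin k, ((k : ℝ)⁻¹) • z i) ⟨s(u, v), he⟩ = dist (f u) (f v) ^ 2 := by
      rw [dist_sq_eq']
      simp only [Finset.sum_apply, Pi.smul_apply, smul_eq_mul, hz, Sym2.lift_mk]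
      exact Finset.sum_congr rfl fun i _ => by field_simp
    rw [h2, hf u v huv] at h1
    exact (eq_of_sq_eq' (hd _ he) dist_nonneg h1).symm
  · -- 3-realizable ⇒ convexity
    rintro hreal F H hFH hdisj dF hdF ℓ₀ hℓ₀ ℓ₁ hℓ₁ a b ha hb hab
    classical
    obtain ⟨f₀, hf₀F, hf₀H⟩ := hℓ₀
    obtain ⟨f₁, hf₁F, hf₁H⟩ := hℓ₁
    have hHsub : H ⊆ G.edgeSet := hFH ▸ Set.subset_union_right
    have hFsub : F ⊆ G.edgeSet := hFH ▸ Set.subset_union_left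
    have hℓnn : ∀ e : H, 0 ≤ a * ℓ₀ e + b * ℓ₁ e := by
      rintro ⟨e, he⟩
      induction e using Sym2.ind with
      | _ u v =>
        rw [hf₀H ⟨_, he⟩ u v rfl, hf₁H ⟨_, he⟩ u v rfl]
        positivity
    set g : V → EuclideanSpace ℝ (Fin 6) := fun w =>
      WithLp.toLp 2 ![Real.sqrt a * f₀ w 0, Real.sqrt a * f₀ w 1, Real.sqrt a * f₀ w 2,
        Real.sqrt b * f₁ w 0, Real.sqrt b * f₁ w 1, Real.sqrt b * f₁ w 2] with hgdef
    have key : ∀ u v : V,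
        dist (g u) (g v) ^ 2 = a * dist (f₀ u) (f₀ v) ^ 2 + b * dist (f₁ u) (f₁ v) ^ 2 := by
      intro u v
      rw [dist_sq_eq', dist_sq_eq', dist_sq_eq']
      simp only [hgdef, PiLp.toLp_apply, Fin.sum_univ_succ, Finset.univ_eq_empty, Finset.sum_empty,
        Matrix.cons_val_zero, Matrix.cons_val_succ, Fin.succ_zero_eq_one, Fin.succ_one_eq_two]
      ring_nf
      rw [Real.sq_sqrt ha, Real.sq_sqrt hb]
      ring
    set d : Sym2 V → ℝ := fun e =>
      if h : e ∈ H then Real.sqrt (a * ℓ₀ ⟨e, h⟩ + b * ℓ₁ ⟨e, h⟩) else dF e with hddef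
    have hdnn : ∀ e ∈ G.edgeSet, 0 ≤ d e := by
      intro e he
      simp only [hddef]
      by_cases h : e ∈ H
      · rw [dif_pos h]; exact Real.sqrt_nonneg _
      · rw [dif_neg h]
        have : e ∈ F := by
          rcases (hFH ▸ he : e ∈ F ∪ H) with h' | h'
          · exact h'
          · exact absurd h' h
        exact hdF e this
    have hgH : ∀ (e : Sym2 V) (he : e ∈ H) (u v : V), e = s(u, v) →
        dist (g u) (g v) ^ 2 = a * ℓ₀ ⟨e, he⟩ + b * ℓ₁ ⟨e, he⟩ := by
      intro e he u v hev
      rw [key u v, hf₀H ⟨e, he⟩ u v hev, hf₁H ⟨e, he⟩ u v hev]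
    have hgreal : IsRealization G d 6 g := by
      intro u v huv
      have he : s(u, v) ∈ F ∪ H := hFH ▸ G.mem_edgeSet.mpr huv
      simp only [hddef]
      by_cases h : s(u, v) ∈ H
      · rw [dif_pos h, ← Real.sqrt_sq (dist_nonneg (x := g u) (y := g v)),
          hgH s(u, v) h u v rfl]
      · have hF : s(u, v) ∈ F := by
          rcases he with h' | h'
          · exact h'
          · exact absurd h' h
        rw [dif_neg h]
        have hsq : dist (g u) (g v) ^ 2 = dF s(u, v) ^ 2 := by
          rw [key u v, hf₀F u v hF, hf₁F u v hF]; nlinarith [hab]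
        exact eq_of_sq_eq' dist_nonneg (hdF _ hF) hsq
    obtain ⟨f, hfreal⟩ := hreal d hdnn ⟨6, by norm_num, g, hgreal⟩
    refine ⟨f, ?_, ?_⟩
    · intro u v hF
      have huv : G.Adj u v := G.mem_edgeSet.mp (hFsub hF)
      have hnH : s(u, v) ∉ H := fun h => (hdisj.ne_of_mem hF h) rfl
      rw [hfreal u v huv]
      simp only [hddef]
      rw [dif_neg hnH]
    · rintro ⟨e, he⟩ u v hev
      simp only at hev
      subst hev
      have huv : G.Adj u v := G.mem_edgeSet.mp (hHsub he)
      have h1 : dist (f u) (f v) = Real.sqrt (a * ℓ₀ ⟨s(u, v), he⟩ + b * ℓ₁ ⟨s(u, v), he⟩) := by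
        rw [hfreal u v huv]
        simp only [hddef]
        rw [dif_pos he]
      have h2 : dist (f u) (f v) ^ 2 = a * ℓ₀ ⟨s(u, v), he⟩ + b * ℓ₁ ⟨s(u, v), he⟩ := by
        rw [h1, Real.sq_sqrt (hℓnn ⟨s(u, v), he⟩)]
      simp only [Pi.add_apply, Pi.smul_apply, smul_eq_mul]
      rw [h2]
end

section
/- Let G_F = (V, F) be a partial 3-tree and let H be a set of additional edges on V such that G = (V, F ∪ H) is a complete 3-tree. Then for every Euclidean realizable edge-length assignment d_F : F → ℝ (d_F ≥ 0), the Cayley configuration space Φ_H(G, F, d_F), i.e. the set of vectors of squared distances over H attained by realizations of ((V, F), d_F) in ℝ³, is a convex subset of ℝ^H. -/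
/-- Add a new (apex) vertex adjacent to exactly the three vertices `a`, `b`, `c`. -/
def addApexToTriangle {V : Type} (G : SimpleGraph V) (a b c : V) :
    SimpleGraph (Option V) :=
  SimpleGraph.fromEdgeSet
    (Sym2.map Option.some '' G.edgeSet ∪
      {s((none : Option V), some a), s((none : Option V), some b), s((none : Option V), some c)})

/-- Complete 3-trees: `K₄` is a complete 3-tree, and adding a new vertex adjacent to
exactly the three vertices of a triangle of a complete 3-tree yields a complete 3-tree
(closed under graph isomorphism). -/
inductive IsComplete3Tree : ∀ {V : Type}, SimpleGraph V → Prop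
  | base : IsComplete3Tree (⊤ : SimpleGraph (Fin 4))
  | extend {V : Type} {G : SimpleGraph V} (a b c : V)
      (hab : G.Adj a b) (hac : G.Adj a c) (hbc : G.Adj b c)
      (hG : IsComplete3Tree G) : IsComplete3Tree (addApexToTriangle G a b c)
  | iso {V W : Type} {G : SimpleGraph V} {H : SimpleGraph W}
      (e : G ≃g H) (hG : IsComplete3Tree G) : IsComplete3Tree H

open scoped RealInnerProductSpace

lemma gram_norm {E : Type*} [NormedAddCommGroup E] [InnerProductSpace ℝ E]
    {F : Type*} [NormedAddCommGroup F] [InnerProductSpace ℝ F]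
    {u v : E} {u' v' : F} (h1 : ‖u'‖ = ‖u‖) (h2 : ‖v'‖ = ‖v‖)
    (h3 : ⟪u', v'⟫ = ⟪u, v⟫) (γ δ : ℝ) :
    ‖γ • u' + δ • v'‖ = ‖γ • u + δ • v‖ := by
  have e1 : ‖γ • u' + δ • v'‖ ^ 2 = ‖γ • u + δ • v‖ ^ 2 := by
    rw [norm_add_sq_real, norm_add_sq_real, norm_smul, norm_smul, norm_smul, norm_smul,
      real_inner_smul_left, real_inner_smul_left, real_inner_smul_right, real_inner_smul_right,
      h1, h2, h3]
  have := norm_nonneg (γ • u' + δ • v')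
  have := norm_nonneg (γ • u + δ • v)
  nlinarith

/-- Pythagorean-style computation: if `m ⟂ r` and `m' ⟂ r'` with `‖m'‖ = ‖m‖`,
`‖r'‖ = ‖r‖`, then `‖m' + r'‖ = ‖m + r‖`. -/
lemma norm_add_of_orth {E : Type*} [NormedAddCommGroup E] [InnerProductSpace ℝ E]
    {F : Type*} [NormedAddCommGroup F] [InnerProductSpace ℝ F]
    {m r : E} {m' r' : F} (hm : ‖m'‖ = ‖m‖) (hr : ‖r'‖ = ‖r‖)
    (ho : ⟪m, r⟫ = 0) (ho' : ⟪m', r'⟫ = 0) : ‖m' + r'‖ = ‖m + r‖ := by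
  have e1 : ‖m' + r'‖ ^ 2 = ‖m + r‖ ^ 2 := by
    rw [norm_add_sq_real, norm_add_sq_real, hm, hr, ho, ho']
  have := norm_nonneg (m' + r')
  have := norm_nonneg (m + r)
  nlinarith

/-- Key extension lemma: given three "anchor" points `a b c` in `ℝ³` congruent to
`A B C` in an inner product space `E`, any further point `x` of `E` can be matched
by a point `y` of `ℝ³` with the correct distances to the anchors. -/
lemma ext3 {E : Type*} [NormedAddCommGroup E] [InnerProductSpace ℝ E]
    [FiniteDimensional ℝ E] (A B C x : E) (a b c : EuclideanSpace ℝ (Fin 3))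
    (hab : dist a b = dist A B) (hac : dist a c = dist A C) (hbc : dist b c = dist B C) :
    ∃ y : EuclideanSpace ℝ (Fin 3),
      dist y a = dist x A ∧ dist y b = dist x B ∧ dist y c = dist x C := by
  set u : E := B - A with hu
  set v : E := C - A with hv
  set w : E := x - A with hw
  set u' : EuclideanSpace ℝ (Fin 3) := b - a with hu'
  set v' : EuclideanSpace ℝ (Fin 3) := c - a with hv'
  have h1 : ‖u'‖ = ‖u‖ := by
    simpa [hu', hu, dist_eq_norm, norm_sub_rev] using hab
  have h2 : ‖v'‖ = ‖v‖ := by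
    simpa [hv', hv, dist_eq_norm, norm_sub_rev] using hac
  have h12 : ‖u' - v'‖ = ‖u - v‖ := by
    have : u' - v' = b - c := by rw [hu', hv']; abel
    have thatE : u - v = B - C := by rw [hu, hv]; abel
    rw [this, thatE, ← dist_eq_norm, ← dist_eq_norm, hbc]
  have h3 : ⟪u', v'⟫ = ⟪u, v⟫ := by
    have e1 : ‖u' - v'‖ ^ 2 = ‖u'‖ ^ 2 - 2 * ⟪u', v'⟫ + ‖v'‖ ^ 2 := norm_sub_sq_real u' v'
    have e2 : ‖u - v‖ ^ 2 = ‖u‖ ^ 2 - 2 * ⟪u, v⟫ + ‖v‖ ^ 2 := norm_sub_sq_real u v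
    rw [h12, h1, h2] at e1
    linarith
  -- orthogonal decomposition of w with respect to span {u, v}
  set S : Submodule ℝ E := Submodule.span ℝ {u, v} with hS
  obtain ⟨s, hsS, r, hrS, hwsr⟩ := S.exists_add_mem_mem_orthogonal w
  obtain ⟨α, β, hαβ⟩ := Submodule.mem_span_pair.mp hsS
  -- target span
  set T : Submodule ℝ (EuclideanSpace ℝ (Fin 3)) := Submodule.span ℝ {u', v'} with hT
  -- a nonzero vector orthogonal to T
  have hTrank : Module.finrank ℝ T ≤ 2 := by
    classical
    refine le_trans (finrank_span_le_card _) ?_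
    have : ({u', v'} : Set (EuclideanSpace ℝ (Fin 3))).toFinset ⊆ {u', v'} := by
      simp
    exact le_trans (Finset.card_le_card this) (Finset.card_insert_le _ _)
  have hTbot : Tᗮ ≠ ⊥ := by
    intro h
    have := Submodule.finrank_add_finrank_orthogonal T
    rw [h] at this
    simp [finrank_euclideanSpace_fin] at this
    omega
  obtain ⟨z, hzT, hz0⟩ := Submodule.exists_mem_ne_zero_of_ne_bot hTbot
  set r' : EuclideanSpace ℝ (Fin 3) := (‖r‖ / ‖z‖) • z with hr'
  have hr'T : r' ∈ Tᗮ := Submodule.smul_mem _ _ hzT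
  have hr'norm : ‖r'‖ = ‖r‖ := by
    rw [hr', norm_smul]
    rw [norm_div, Real.norm_eq_abs, abs_norm, Real.norm_eq_abs, abs_norm,
      div_mul_cancel₀ _ (norm_ne_zero_iff.mpr hz0)]
  -- the candidate point
  set y : EuclideanSpace ℝ (Fin 3) := a + ((α • u' + β • v') + r') with hy
  -- key computation
  have key : ∀ γ δ : ℝ, ‖((α • u' + β • v') + r') - (γ • u' + δ • v')‖
      = ‖w - (γ • u + δ • v)‖ := by
    intro γ δ
    have hm' : ((α • u' + β • v') + r') - (γ • u' + δ • v')
        = ((α - γ) • u' + (β - δ) • v') + r' := by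
      rw [sub_smul, sub_smul]; abel
    have hm : w - (γ • u + δ • v) = ((α - γ) • u + (β - δ) • v) + r := by
      rw [hwsr, ← hαβ, sub_smul, sub_smul]; abel
    rw [hm', hm]
    have huS : u ∈ S := Submodule.subset_span (Set.mem_insert _ _)
    have hvS : v ∈ S := Submodule.subset_span (Set.mem_insert_of_mem _ rfl)
    have huT : u' ∈ T := Submodule.subset_span (Set.mem_insert _ _)
    have hvT : v' ∈ T := Submodule.subset_span (Set.mem_insert_of_mem _ rfl)
    have hmS : (α - γ) • u + (β - δ) • v ∈ S :=
      Submodule.add_mem _ (Submodule.smul_mem _ _ huS) (Submodule.smul_mem _ _ hvS)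
    have hmT : (α - γ) • u' + (β - δ) • v' ∈ T :=
      Submodule.add_mem _ (Submodule.smul_mem _ _ huT) (Submodule.smul_mem _ _ hvT)
    refine norm_add_of_orth (gram_norm h1 h2 h3 _ _) hr'norm ?_ ?_
    · exact real_inner_comm r _ ▸ (Submodule.mem_orthogonal S r).mp hrS _ hmS
    · exact real_inner_comm r' _ ▸ (Submodule.mem_orthogonal T r').mp hr'T _ hmT
  refine ⟨y, ?_, ?_, ?_⟩
  · have := key 0 0
    simp only [zero_smul, add_zero, sub_zero] at this
    rw [hy, dist_eq_norm, add_sub_cancel_left, this, hw, ← dist_eq_norm]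
  · have := key 1 0
    simp only [one_smul, zero_smul, add_zero] at this
    have hyb : y - b = ((α • u' + β • v') + r') - u' := by rw [hy, hu']; abel
    have hxB : x - B = w - u := by rw [hw, hu]; abel
    rw [dist_eq_norm, dist_eq_norm, hyb, hxB, this]
  · have := key 0 1
    simp only [one_smul, zero_smul, zero_add] at this
    have hyc : y - c = ((α • u' + β • v') + r') - v' := by rw [hy, hv']; abel
    have hxC : x - C = w - v := by rw [hw, hv]; abel
    rw [dist_eq_norm, dist_eq_norm, hyc, hxC, this]

lemma addApex_adj_cases {V : Type} {G : SimpleGraph V} {a b c : V} {u v : Option V}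
    (h : (addApexToTriangle G a b c).Adj u v) :
    (∃ u' v', u = some u' ∧ v = some v' ∧ G.Adj u' v') ∨
    (u = none ∧ (v = some a ∨ v = some b ∨ v = some c)) ∨
    (v = none ∧ (u = some a ∨ u = some b ∨ u = some c)) := by
  rw [addApexToTriangle, SimpleGraph.fromEdgeSet_adj] at h
  obtain ⟨hmem, hne⟩ := h
  rcases hmem with ⟨e, he, hmap⟩ | hmem
  · left
    induction e using Sym2.ind with
    | _ x y =>
      rw [Sym2.map_pair_eq, Sym2.eq_iff] at hmap
      rw [SimpleGraph.mem_edgeSet] at he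
      rcases hmap with ⟨hx, hy⟩ | ⟨hx, hy⟩
      · exact ⟨x, y, hx.symm, hy.symm, he⟩
      · exact ⟨y, x, hy.symm, hx.symm, he.symm⟩
  · right
    simp only [Set.mem_insert_iff, Set.mem_singleton_iff, Sym2.eq_iff] at hmem
    rcases hmem with (⟨h1, h2⟩ | ⟨h1, h2⟩) | (⟨h1, h2⟩ | ⟨h1, h2⟩) | (⟨h1, h2⟩ | ⟨h1, h2⟩)
    · exact Or.inl ⟨h1, Or.inl h2⟩
    · exact Or.inr ⟨h2, Or.inl h1⟩
    · exact Or.inl ⟨h1, Or.inr (Or.inl h2)⟩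
    · exact Or.inr ⟨h2, Or.inr (Or.inl h1)⟩
    · exact Or.inl ⟨h1, Or.inr (Or.inr h2)⟩
    · exact Or.inr ⟨h2, Or.inr (Or.inr h1)⟩

/-- Any realization of a complete 3-tree in a finite-dimensional real inner product
space can be folded into `ℝ³` preserving all edge lengths. -/
lemma flatten {V : Type} {G : SimpleGraph V} (h : IsComplete3Tree G)
    {E : Type*} [NormedAddCommGroup E] [InnerProductSpace ℝ E] [FiniteDimensional ℝ E]
    (f : V → E) : ∃ g : V → EuclideanSpace ℝ (Fin 3),
      ∀ u v, G.Adj u v → dist (g u) (g v) = dist (f u) (f v) := by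
  induction h with
  | base =>
    obtain ⟨y1, h10, -, -⟩ := ext3 (f 0) (f 0) (f 0) (f 1)
      (0 : EuclideanSpace ℝ (Fin 3)) 0 0 (by simp) (by simp) (by simp)
    obtain ⟨y2, h20, h21, -⟩ := ext3 (f 0) (f 1) (f 1) (f 2) 0 y1 y1
      (by rw [dist_comm, h10, dist_comm]) (by rw [dist_comm, h10, dist_comm]) (by simp)
    obtain ⟨y3, h30, h31, h32⟩ := ext3 (f 0) (f 1) (f 2) (f 3) 0 y1 y2
      (by rw [dist_comm, h10, dist_comm]) (by rw [dist_comm, h20, dist_comm])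
      (by rw [dist_comm, h21, dist_comm])
    refine ⟨![0, y1, y2, y3], ?_⟩
    intro u v huv
    rw [SimpleGraph.top_adj] at huv
    fin_cases u <;> fin_cases v <;> simp_all [dist_comm] <;> exact dist_comm _ _
  | extend a b c hab hac hbc hG ih =>
    obtain ⟨g, hg⟩ := ih (fun v => f (some v))
    obtain ⟨y, hya, hyb, hyc⟩ := ext3 (f (some a)) (f (some b)) (f (some c)) (f none)
      (g a) (g b) (g c) (hg a b hab) (hg a c hac) (hg b c hbc)
    refine ⟨fun o => o.elim y g, ?_⟩
    intro u v huv
    rcases addApex_adj_cases huv with ⟨u', v', rfl, rfl, h'⟩ | ⟨rfl, rfl | rfl | rfl⟩ |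
      ⟨rfl, rfl | rfl | rfl⟩
    · exact hg u' v' h'
    · exact hya
    · exact hyb
    · exact hyc
    · show dist (g a) y = _
      rw [dist_comm, hya, dist_comm]
    · show dist (g b) y = _
      rw [dist_comm, hyb, dist_comm]
    · show dist (g c) y = _
      rw [dist_comm, hyc, dist_comm]
  | iso e hG ih =>
    obtain ⟨g, hg⟩ := ih (fun v => f (e v))
    refine ⟨fun w => g (e.symm w), ?_⟩
    intro u v huv
    have h1 := hg (e.symm u) (e.symm v) (e.symm.map_adj_iff.mpr huv)
    simpa using h1

/-- if `G_F = (V, F)` is a partial 3-tree and `H` is a set of additional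
edges such that `G = (V, F ∪ H)` is a complete 3-tree, then for every Euclidean
realizable nonnegative edge-length assignment `d_F` on `F`, the Cayley configuration
space `Φ_H(G, F, d_F)` of squared distances over `H` is a convex subset of `ℝ^H`. -/
theorem cayleySpace_convex_of_complete3Tree {V : Type} [Fintype V]
    (GF GH : SimpleGraph V) (hdisj : Disjoint GF.edgeSet GH.edgeSet)
    (h3tree : IsComplete3Tree (GF ⊔ GH))
    (dF : Sym2 V → ℝ) (hnn : ∀ e ∈ GF.edgeSet, 0 ≤ dF e)
    (hreal : EuclideanRealizable GF dF) :
    Convex ℝ (CayleySpace GF.edgeSet GH.edgeSet dF) := by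
  rintro ℓ₁ ⟨f₁, hf₁F, hf₁H⟩ ℓ₂ ⟨f₂, hf₂F, hf₂H⟩ p q hp hq hpq
  -- combined realization in the ℓ²-product space
  set h : V → WithLp 2 (EuclideanSpace ℝ (Fin 3) × EuclideanSpace ℝ (Fin 3)) :=
    fun v => (WithLp.equiv 2 _).symm (Real.sqrt p • f₁ v, Real.sqrt q • f₂ v) with hh
  have hdist : ∀ u v : V, dist (h u) (h v) ^ 2
      = p * dist (f₁ u) (f₁ v) ^ 2 + q * dist (f₂ u) (f₂ v) ^ 2 := by
    intro u v
    rw [dist_eq_norm, WithLp.prod_norm_sq_eq_of_L2, WithLp.sub_fst, WithLp.sub_snd, hh]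
    rw [WithLp.equiv_symm_apply, WithLp.toLp_fst, WithLp.toLp_fst, WithLp.toLp_snd,
      WithLp.toLp_snd, ← smul_sub, ← smul_sub, norm_smul, norm_smul,
      Real.norm_eq_abs, Real.norm_eq_abs, abs_of_nonneg (Real.sqrt_nonneg p),
      abs_of_nonneg (Real.sqrt_nonneg q), mul_pow, mul_pow, Real.sq_sqrt hp,
      Real.sq_sqrt hq, dist_eq_norm, dist_eq_norm]
  obtain ⟨g, hg⟩ := flatten h3tree h
  refine ⟨g, ?_, ?_⟩
  · intro u v huv
    have hadj : (GF ⊔ GH).Adj u v :=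
      (SimpleGraph.sup_adj _ _ _ _).mpr (Or.inl ((SimpleGraph.mem_edgeSet GF).mp huv))
    have h3 : dist (g u) (g v) ^ 2 = dF s(u, v) ^ 2 := by
      rw [hg u v hadj, hdist, hf₁F u v huv, hf₂F u v huv, ← add_mul, hpq, one_mul]
    rw [← Real.sqrt_sq dist_nonneg, h3, Real.sqrt_sq (hnn _ huv)]
  · intro e u v he
    have he' : (s(u, v) : Sym2 V) ∈ GH.edgeSet := he ▸ e.2
    have hadj : (GF ⊔ GH).Adj u v :=
      (SimpleGraph.sup_adj _ _ _ _).mpr (Or.inr ((SimpleGraph.mem_edgeSet GH).mp he'))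
    show (p • ℓ₁ + q • ℓ₂) e = _
    rw [Pi.add_apply, Pi.smul_apply, Pi.smul_apply, smul_eq_mul, smul_eq_mul,
      hf₁H e u v he, hf₂H e u v he, hg u v hadj, hdist]
end

section
/- Every complete 3-tree is 3-realizable: for every Euclidean realizable edge-length assignment d on a complete 3-tree G, there is a realization of (G, d) in ℝ³. -/
open Submodule Set Finset InnerProductSpace Module in
private lemma aux_gram_map {E F : Type*} [NormedAddCommGroup E] [InnerProductSpace ℝ E]
    [NormedAddCommGroup F] [InnerProductSpace ℝ F] {ι : Type*} [Fintype ι]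
    (x : ι → E) (y : ι → F) (h : ∀ i j, ⟪x i, x j⟫_ℝ = ⟪y i, y j⟫_ℝ) :
    ∃ T : E → F, (∀ i, T (x i) = y i) ∧
      (∀ v ∈ span ℝ (range x), T v ∈ span ℝ (range y)) ∧
      (∀ v w, v ∈ span ℝ (range x) → w ∈ span ℝ (range x) → ⟪T v, T w⟫_ℝ = ⟪v, w⟫_ℝ) := by
  classical
  have key : ∀ c c' : ι → ℝ,
      ⟪∑ i, c i • y i, ∑ j, c' j • y j⟫_ℝ = ⟪∑ i, c i • x i, ∑ j, c' j • x j⟫_ℝ := by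
    intro c c'
    simp only [sum_inner, inner_sum, real_inner_smul_left, real_inner_smul_right, h]
  refine ⟨fun v => if hv : ∃ c : ι → ℝ, ∑ i, c i • x i = v then
      ∑ i, hv.choose i • y i else 0, ?_, ?_, ?_⟩
  · intro i
    have hx : ∃ c : ι → ℝ, ∑ j, c j • x j = x i :=
      ⟨Pi.single i 1, by simp [Pi.single_apply, ite_smul]⟩
    simp only []
    rw [dif_pos hx]
    set c := hx.choose with hc
    have hcx : ∑ j, c j • x j = x i := hx.choose_spec
    have h1 : ∀ j, ⟪∑ i, c i • y i, y j⟫_ℝ = ⟪∑ i, c i • x i, x j⟫_ℝ := by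
      intro j
      simp only [sum_inner, real_inner_smul_left, h]
    have : ⟪∑ j, c j • y j - y i, ∑ j, c j • y j - y i⟫_ℝ = 0 := by
      rw [real_inner_sub_sub_self, key, h1, ← h, hcx]
      ring
    have := inner_self_eq_zero.mp this
    exact sub_eq_zero.mp this
  · intro v hv
    rw [mem_span_range_iff_exists_fun ℝ] at hv
    simp only []
    rw [dif_pos hv]
    exact Submodule.sum_mem _ fun i _ => Submodule.smul_mem _ _ (subset_span (mem_range_self i))
  · intro v w hv hw
    rw [mem_span_range_iff_exists_fun ℝ] at hv hw
    simp only []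
    rw [dif_pos hv, dif_pos hw, key, hv.choose_spec, hw.choose_spec]

private lemma aux_eq_of_sq_eq {a b : ℝ} (ha : 0 ≤ a) (hb : 0 ≤ b) (h : a ^ 2 = b ^ 2) : a = b := by
  nlinarith

open InnerProductSpace in
private lemma aux_inner_diff {E : Type*} [NormedAddCommGroup E] [InnerProductSpace ℝ E]
    (a b c : E) :
    ⟪a - c, b - c⟫_ℝ = ((dist a c) ^ 2 + (dist b c) ^ 2 - (dist a b) ^ 2) / 2 := by
  have h : (a - c) - (b - c) = a - b := by abel
  have := real_inner_sub_sub_self (a - c) (b - c)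
  rw [h] at this
  simp only [dist_eq_norm, real_inner_self_eq_norm_sq] at *
  linarith

open Submodule Set Finset InnerProductSpace Module in
private lemma aux_place_point {k m : ℕ} (hm : m ≤ 2)
    (x : Fin (m + 1) → EuclideanSpace ℝ (Fin k)) (y : Fin (m + 1) → EuclideanSpace ℝ (Fin 3))
    (hd : ∀ i j, dist (x i) (x j) = dist (y i) (y j)) (p : EuclideanSpace ℝ (Fin k)) :
    ∃ q : EuclideanSpace ℝ (Fin 3), ∀ i, dist q (y i) = dist p (x i) := by
  classical
  set u : Fin m → EuclideanSpace ℝ (Fin k) := fun i => x i.succ - x 0 with hu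
  set w : Fin m → EuclideanSpace ℝ (Fin 3) := fun i => y i.succ - y 0 with hw
  have hinner : ∀ i j, ⟪u i, u j⟫_ℝ = ⟪w i, w j⟫_ℝ := by
    intro i j
    rw [hu, hw]
    simp only []
    rw [aux_inner_diff, aux_inner_diff, hd, hd, hd]
  obtain ⟨T, hT1, hT2, hT3⟩ := aux_gram_map u w hinner
  set U := span ℝ (range u) with hU
  set W := span ℝ (range w) with hWdef
  set v₀ : EuclideanSpace ℝ (Fin k) :=
    (orthogonalProjection U (p - x 0) : EuclideanSpace ℝ (Fin k)) with hv₀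
  have hv₀U : v₀ ∈ U := SetLike.coe_mem _
  set vp : EuclideanSpace ℝ (Fin k) := (p - x 0) - v₀ with hvp
  have hvpU : vp ∈ Uᗮ := Submodule.sub_starProjection_mem_orthogonal (K := U) (p - x 0)
  have hWne : Wᗮ ≠ ⊥ := by
    intro hbot
    rw [Submodule.orthogonal_eq_bot_iff] at hbot
    have h1 : finrank ℝ W ≤ m := by
      have := finrank_range_le_card (R := ℝ) w
      rwa [Set.finrank, Fintype.card_fin] at this
    have h2 : finrank ℝ W = 3 := by
      rw [hbot, finrank_top, finrank_euclideanSpace_fin]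
    omega
  obtain ⟨z₀, hz₀W, hz₀⟩ := (Submodule.ne_bot_iff _).mp hWne
  set z : EuclideanSpace ℝ (Fin 3) := (‖vp‖ / ‖z₀‖) • z₀ with hz
  have hzW : z ∈ Wᗮ := Submodule.smul_mem _ _ hz₀W
  have hznorm : ‖z‖ = ‖vp‖ := by
    rw [hz, norm_smul, norm_div, norm_norm, norm_norm, div_mul_cancel₀]
    exact norm_ne_zero_iff.mpr hz₀
  have hTv₀W : T v₀ ∈ W := hT2 _ hv₀U
  refine ⟨y 0 + (T v₀ + z), ?_⟩
  intro i
  refine Fin.cases ?_ ?_ i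
  · rw [dist_eq_norm, dist_eq_norm]
    refine aux_eq_of_sq_eq (norm_nonneg _) (norm_nonneg _) ?_
    have e1 : y 0 + (T v₀ + z) - y 0 = T v₀ + z := by abel
    rw [e1]
    have i1 : ⟪T v₀, z⟫_ℝ = 0 := inner_right_of_mem_orthogonal hTv₀W hzW
    have i2 : ⟪v₀, vp⟫_ℝ = 0 := inner_right_of_mem_orthogonal hv₀U hvpU
    have i3 : ⟪T v₀, T v₀⟫_ℝ = ⟪v₀, v₀⟫_ℝ := hT3 _ _ hv₀U hv₀U
    have e2 : p - x 0 = v₀ + vp := by rw [hvp]; abel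
    rw [e2, norm_add_sq_real, norm_add_sq_real, i1, i2, hznorm,
      ← real_inner_self_eq_norm_sq, ← real_inner_self_eq_norm_sq (v₀), i3]
  · intro j
    rw [dist_eq_norm, dist_eq_norm]
    refine aux_eq_of_sq_eq (norm_nonneg _) (norm_nonneg _) ?_
    have hujU : u j ∈ U := subset_span (mem_range_self j)
    have hwjW : w j ∈ W := subset_span (mem_range_self j)
    have e1 : y 0 + (T v₀ + z) - y j.succ = (T v₀ - w j) + z := by
      rw [hw]; simp only []; abel
    have e2 : p - x j.succ = (v₀ - u j) + vp := by
      rw [hvp, hu]; simp only []; abel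
    rw [e1, e2]
    have i1 : ⟪T v₀ - w j, z⟫_ℝ = 0 :=
      inner_right_of_mem_orthogonal (Submodule.sub_mem _ hTv₀W hwjW) hzW
    have i2 : ⟪v₀ - u j, vp⟫_ℝ = 0 :=
      inner_right_of_mem_orthogonal (Submodule.sub_mem _ hv₀U hujU) hvpU
    rw [norm_add_sq_real, norm_add_sq_real, i1, i2, hznorm]
    have e3 : ‖T v₀ - w j‖ ^ 2 = ‖v₀ - u j‖ ^ 2 := by
      rw [← hT1 j, norm_sub_sq_real, norm_sub_sq_real,
        ← real_inner_self_eq_norm_sq, ← real_inner_self_eq_norm_sq,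
        ← real_inner_self_eq_norm_sq, ← real_inner_self_eq_norm_sq,
        hT3 _ _ hv₀U hv₀U, hT3 _ _ hv₀U hujU, hT3 _ _ hujU hujU]
    rw [e3]

private lemma aux_flatten {k : ℕ} (n : ℕ) (hn : n ≤ 4) (p : Fin n → EuclideanSpace ℝ (Fin k)) :
    ∃ q : Fin n → EuclideanSpace ℝ (Fin 3), ∀ i j, dist (q i) (q j) = dist (p i) (p j) := by
  induction n with
  | zero => exact ⟨fun _ => 0, fun i => i.elim0⟩
  | succ n ih =>
    obtain ⟨q', hq'⟩ := ih (by omega) (fun i => p i.castSucc)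
    rcases Nat.eq_zero_or_pos n with h0 | hpos
    · subst h0
      refine ⟨fun _ => 0, fun i j => ?_⟩
      have : i = j := by omega
      subst this; simp
    · obtain ⟨m, rfl⟩ : ∃ m, n = m + 1 := ⟨n - 1, by omega⟩
      have hm : m ≤ 2 := by omega
      obtain ⟨qn, hqn⟩ := aux_place_point hm (fun i => p i.castSucc) q'
        (fun i j => (hq' i j).symm) (p (Fin.last (m + 1 + 1 - 1)))
      refine ⟨Fin.snoc q' qn, fun i j => ?_⟩
      refine Fin.lastCases ?_ ?_ i <;> [skip; intro i'] <;>
        (refine Fin.lastCases ?_ ?_ j <;> [skip; intro j'])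
      · simp
      · simp only [Fin.snoc_last, Fin.snoc_castSucc]
        exact hqn j'
      · simp only [Fin.snoc_last, Fin.snoc_castSucc]
        rw [dist_comm, dist_comm (p i'.castSucc)]
        exact hqn i'
      · simp only [Fin.snoc_castSucc]
        exact hq' i' j'

private lemma aux_key_realize {V : Type} {G : SimpleGraph V} (hG : IsComplete3Tree G)
    (k : ℕ) (f : V → EuclideanSpace ℝ (Fin k)) :
    ∃ g : V → EuclideanSpace ℝ (Fin 3),
      ∀ u v, G.Adj u v → dist (g u) (g v) = dist (f u) (f v) := by
  induction hG generalizing k with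
  | base =>
    obtain ⟨q, hq⟩ := aux_flatten 4 (le_refl 4) f
    exact ⟨q, fun u v _ => hq u v⟩
  | @extend V' G' a b c hab hac hbc hG' ih =>
    obtain ⟨g₀, hg₀⟩ := ih k (fun v => f (some v))
    set x : Fin 3 → EuclideanSpace ℝ (Fin k) := ![f (some a), f (some b), f (some c)] with hx
    set y : Fin 3 → EuclideanSpace ℝ (Fin 3) := ![g₀ a, g₀ b, g₀ c] with hy
    have h1 : dist (f (some a)) (f (some b)) = dist (g₀ a) (g₀ b) := (hg₀ a b hab).symm
    have h2 : dist (f (some a)) (f (some c)) = dist (g₀ a) (g₀ c) := (hg₀ a c hac).symm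
    have h3 : dist (f (some b)) (f (some c)) = dist (g₀ b) (g₀ c) := (hg₀ b c hbc).symm
    have h1' : dist (f (some b)) (f (some a)) = dist (g₀ b) (g₀ a) := by
      rw [dist_comm, dist_comm (g₀ b)]; exact h1
    have h2' : dist (f (some c)) (f (some a)) = dist (g₀ c) (g₀ a) := by
      rw [dist_comm, dist_comm (g₀ c)]; exact h2
    have h3' : dist (f (some c)) (f (some b)) = dist (g₀ c) (g₀ b) := by
      rw [dist_comm, dist_comm (g₀ c)]; exact h3
    have hd : ∀ i j, dist (x i) (x j) = dist (y i) (y j) := by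
      intro i j
      fin_cases i <;> fin_cases j <;>
        simp only [hx, hy, Matrix.cons_val_zero, Matrix.cons_val_one, Matrix.head_cons,
          Matrix.cons_val_two, Matrix.tail_cons, dist_self, Fin.mk_zero, Fin.mk_one] <;>
        first
          | rfl
          | exact h1 | exact h2 | exact h3 | exact h1' | exact h2' | exact h3'
    obtain ⟨q, hq⟩ := aux_place_point (m := 2) (by omega) x y hd (f none)
    refine ⟨fun o => o.elim q g₀, ?_⟩
    intro uu vv hadj
    rw [addApexToTriangle, SimpleGraph.fromEdgeSet_adj] at hadj
    rcases hadj with ⟨hmem, hne⟩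
    simp only [Set.mem_union, Set.mem_insert_iff, Set.mem_singleton_iff] at hmem
    have key0 : dist q (g₀ a) = dist (f none) (f (some a)) := by
      have := hq 0; simpa [hx, hy] using this
    have key1 : dist q (g₀ b) = dist (f none) (f (some b)) := by
      have := hq 1; simpa [hx, hy] using this
    have key2 : dist q (g₀ c) = dist (f none) (f (some c)) := by
      have := hq 2; simpa [hx, hy] using this
    rcases hmem with hmem | h | h | h
    · obtain ⟨e, heG, heq⟩ := hmem
      revert heG heq
      refine Sym2.ind (fun u' v' => ?_) e
      intro heG heq
      rw [Sym2.map_pair_eq, Sym2.eq_iff] at heq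
      have hGadj : G'.Adj u' v' := heG
      rcases heq with ⟨hh1, hh2⟩ | ⟨hh1, hh2⟩ <;> subst hh1 <;> subst hh2
      · simpa using hg₀ u' v' hGadj
      · have := hg₀ u' v' hGadj
        rw [dist_comm (g₀ u'), dist_comm (f (some u'))] at this
        simpa using this
    · rw [Sym2.eq_iff] at h
      rcases h with ⟨hh1, hh2⟩ | ⟨hh1, hh2⟩ <;> subst hh1 <;> subst hh2
      · simpa using key0
      · rw [dist_comm, dist_comm (f (some a))]; simpa using key0
    · rw [Sym2.eq_iff] at h
      rcases h with ⟨hh1, hh2⟩ | ⟨hh1, hh2⟩ <;> subst hh1 <;> subst hh2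
      · simpa using key1
      · rw [dist_comm, dist_comm (f (some b))]; simpa using key1
    · rw [Sym2.eq_iff] at h
      rcases h with ⟨hh1, hh2⟩ | ⟨hh1, hh2⟩ <;> subst hh1 <;> subst hh2
      · simpa using key2
      · rw [dist_comm, dist_comm (f (some c))]; simpa using key2
  | @iso V' W' G' H' e hG' ih =>
    obtain ⟨g', hg'⟩ := ih k (fun v => f (e v))
    refine ⟨fun w => g' (e.symm w), fun u v huv => ?_⟩
    have hadj : G'.Adj (e.symm u) (e.symm v) := e.symm.map_adj_iff.mpr huv
    have := hg' _ _ hadj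
    simpa using this

/-- every complete 3-tree is 3-realizable. -/
theorem complete3Tree_threeRealizable {V : Type} [Fintype V] (G : SimpleGraph V)
    (hG : IsComplete3Tree G) : DRealizable G 3 := by
  intro d _ hr
  obtain ⟨k, _, f, hf⟩ := hr
  obtain ⟨g, hg⟩ := aux_key_realize hG k f
  exact ⟨g, fun u v h => (hg u v h).trans (hf u v h)⟩
end

section
/- Let G₁ = (V₁, E₁) and G₂ = (V₂, E₂) be finite simple graphs such that T := V₁ ∩ V₂ has at most 3 elements and every pair of distinct vertices of T is an edge of both G₁ and G₂ (T is a shared clique). If G₁ and G₂ are both 3-realizable, then their union G₁ ∪ G₂ = (V₁ ∪ V₂, E₁ ∪ E₂) is 3-realizable. -/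
open scoped RealInnerProductSpace

/-- Two families with the same Gram matrix on a finite index set are related by a linear
isometry equivalence of the ambient finite-dimensional real inner product space. -/
lemma exists_linearIsometryEquiv_of_gram {E : Type*} [NormedAddCommGroup E]
    [InnerProductSpace ℝ E] [FiniteDimensional ℝ E] {ι : Type*} (s : Finset ι)
    (v w : ι → E) (h : ∀ i ∈ s, ∀ j ∈ s, ⟪v i, v j⟫ = ⟪w i, w j⟫) :
    ∃ L : E ≃ₗᵢ[ℝ] E, ∀ i ∈ s, L (v i) = w i := by
  classical
  induction s using Finset.induction_on with
  | empty => exact ⟨LinearIsometryEquiv.refl ℝ E, by simp⟩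
  | @insert a s ha ih =>
    obtain ⟨L, hL⟩ := ih (fun i hi j hj =>
      h i (Finset.mem_insert_of_mem hi) j (Finset.mem_insert_of_mem hj))
    set u : E := L (v a) with hu
    set u' : E := w a with hu'
    have hnorm : ‖u‖ = ‖u'‖ := by
      have h1 := h a (Finset.mem_insert_self a s) a (Finset.mem_insert_self a s)
      rw [real_inner_self_eq_norm_sq, real_inner_self_eq_norm_sq] at h1
      have h2 : ‖u‖ = ‖v a‖ := L.norm_map (v a)
      have h3 := norm_nonneg u
      have h4 := norm_nonneg u'
      nlinarith [h1, h2]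
    refine ⟨L.trans (Submodule.reflection (ℝ ∙ (u - u'))ᗮ), ?_⟩
    intro i hi
    rcases Finset.mem_insert.mp hi with rfl | hi
    · exact Submodule.reflection_sub hnorm
    · have hLi : L (v i) = w i := hL i hi
      have hmem : w i ∈ (ℝ ∙ (u - u'))ᗮ := by
        rw [Submodule.mem_orthogonal_singleton_iff_inner_right]
        have e1 : ⟪u, w i⟫ = ⟪w a, w i⟫ := by
          conv_lhs => rw [hu, ← hLi, L.inner_map_map]
          exact h a (Finset.mem_insert_self a s) i (Finset.mem_insert_of_mem hi)
        rw [inner_sub_left, e1, hu']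
        ring
      simpa [hLi] using Submodule.reflection_mem_subspace_eq_self hmem
  done

/-- Two congruent finite families of points in a finite-dimensional real inner product
space are related by an isometry of the ambient space. -/
lemma exists_isometry_of_congruent {E : Type*} [NormedAddCommGroup E]
    [InnerProductSpace ℝ E] [FiniteDimensional ℝ E] {ι : Type*} (s : Finset ι)
    (p q : ι → E) (h : ∀ i ∈ s, ∀ j ∈ s, dist (p i) (p j) = dist (q i) (q j)) :
    ∃ g : E → E, Isometry g ∧ ∀ i ∈ s, g (p i) = q i := by
  classical
  rcases s.eq_empty_or_nonempty with rfl | ⟨i₀, hi₀⟩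
  · exact ⟨id, isometry_id, by simp⟩
  · have hgram : ∀ i ∈ s, ∀ j ∈ s,
        ⟪p i - p i₀, p j - p i₀⟫ = ⟪q i - q i₀, q j - q i₀⟫ := by
      intro i hi j hj
      have key : ∀ x y z : E, ⟪x - z, y - z⟫ =
          (dist x z ^ 2 + dist y z ^ 2 - dist x y ^ 2) / 2 := by
        intro x y z
        have h1 := norm_sub_sq_real (x - z) (y - z)
        have h2 : x - z - (y - z) = x - y := by abel
        rw [h2] at h1
        simp only [dist_eq_norm]
        linarith
      rw [key, key, h i hi j hj, h i hi i₀ hi₀, h j hj i₀ hi₀]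
    obtain ⟨L, hL⟩ := exists_linearIsometryEquiv_of_gram s
      (fun i => p i - p i₀) (fun i => q i - q i₀) hgram
    refine ⟨fun x => L (x - p i₀) + q i₀, ?_, ?_⟩
    · apply Isometry.of_dist_eq
      intro x y
      rw [dist_add_right, L.isometry.dist_eq, dist_sub_right]
    · intro i hi
      simp only []
      rw [hL i hi]
      abel

/-- if `G₁` (with vertex set `V₁`) and `G₂` (with vertex set `V₂`) are
3-realizable and `T = V₁ ∩ V₂` has at most 3 elements, every pair of distinct vertices
of `T` being an edge of both graphs (a shared clique), then `G₁ ∪ G₂` is 3-realizable. -/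
theorem union_threeRealizable_of_shared_clique {V : Type} [Fintype V]
    (V₁ V₂ : Set V) (G₁ G₂ : SimpleGraph V)
    (h₁ : ∀ a b : V, G₁.Adj a b → a ∈ V₁ ∧ b ∈ V₁)
    (h₂ : ∀ a b : V, G₂.Adj a b → a ∈ V₂ ∧ b ∈ V₂)
    (hcover : V₁ ∪ V₂ = Set.univ)
    (hT : (V₁ ∩ V₂).ncard ≤ 3)
    (hclique₁ : ∀ a ∈ V₁ ∩ V₂, ∀ b ∈ V₁ ∩ V₂, a ≠ b → G₁.Adj a b)
    (hclique₂ : ∀ a ∈ V₁ ∩ V₂, ∀ b ∈ V₁ ∩ V₂, a ≠ b → G₂.Adj a b)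
    (hr₁ : DRealizable G₁ 3) (hr₂ : DRealizable G₂ 3) :
    DRealizable (G₁ ⊔ G₂) 3 := by
  classical
  intro d hd hER
  obtain ⟨k, hk, f, hf⟩ := hER
  -- realize G₁ in ℝ³
  obtain ⟨f₁, hf₁⟩ := hr₁ d
    (fun e he => hd e (by rw [SimpleGraph.edgeSet_sup]; exact Or.inl he))
    ⟨k, hk, f, fun u v huv => hf u v (Or.inl huv)⟩
  -- realize G₂ in ℝ³
  obtain ⟨f₂, hf₂⟩ := hr₂ d
    (fun e he => hd e (by rw [SimpleGraph.edgeSet_sup]; exact Or.inr he))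
    ⟨k, hk, f, fun u v huv => hf u v (Or.inr huv)⟩
  -- the shared clique T, as a Finset
  set T : Finset V := Set.Finite.toFinset (Set.toFinite (V₁ ∩ V₂)) with hTdef
  have hTmem : ∀ x, x ∈ T ↔ x ∈ V₁ ∩ V₂ := fun x => Set.Finite.mem_toFinset _
  -- f₁ and f₂ are congruent on T
  have hcong : ∀ i ∈ T, ∀ j ∈ T, dist (f₂ i) (f₂ j) = dist (f₁ i) (f₁ j) := by
    intro i hi j hj
    rcases eq_or_ne i j with rfl | hij
    · simp
    · rw [hf₂ i j (hclique₂ i ((hTmem i).1 hi) j ((hTmem j).1 hj) hij),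
        hf₁ i j (hclique₁ i ((hTmem i).1 hi) j ((hTmem j).1 hj) hij)]
  obtain ⟨g, hgiso, hg⟩ := exists_isometry_of_congruent T f₂ f₁ hcong
  refine ⟨fun v => if v ∈ V₁ then f₁ v else g (f₂ v), ?_⟩
  intro u v huv
  dsimp only
  have key : ∀ x ∈ V₂, (if x ∈ V₁ then f₁ x else g (f₂ x)) = g (f₂ x) := by
    intro x hx
    by_cases hx1 : x ∈ V₁
    · rw [if_pos hx1]
      exact (hg x ((hTmem x).2 ⟨hx1, hx⟩)).symm
    · rw [if_neg hx1]
  rcases huv with huv | huv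
  · obtain ⟨hu, hv⟩ := h₁ u v huv
    simp only [if_pos hu, if_pos hv]
    exact hf₁ u v huv
  · obtain ⟨hu, hv⟩ := h₂ u v huv
    rw [key u hu, key v hv, hgiso.dist_eq]
    exact hf₂ u v huv
end

section
/- Every finite tree is 1-realizable; in fact, every nonnegative edge-length assignment on a finite tree has a realization on the real line ℝ. -/
lemma isPath_concat {V : Type} {G : SimpleGraph V} {r u v : V} {p : G.Walk r u}
    (hp : p.IsPath) (h : G.Adj u v) (hv : v ∉ p.support) : (p.concat h).IsPath := by
  rw [← SimpleGraph.Walk.isPath_reverse_iff, SimpleGraph.Walk.reverse_concat]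
  rw [SimpleGraph.Walk.cons_isPath_iff]
  refine ⟨hp.reverse, ?_⟩
  rwa [SimpleGraph.Walk.support_reverse, List.mem_reverse]

def wgt {V : Type} {G : SimpleGraph V} (d : Sym2 V → ℝ) {a b : V} (p : G.Walk a b) : ℝ :=
  (p.edges.map d).sum

lemma wgt_append {V : Type} {G : SimpleGraph V} (d : Sym2 V → ℝ) {a b c : V}
    (p : G.Walk a b) (q : G.Walk b c) : wgt d (p.append q) = wgt d p + wgt d q := by
  simp [wgt, SimpleGraph.Walk.edges_append]

lemma dist_single₁ (a b : ℝ) :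
    dist (EuclideanSpace.single (0 : Fin 1) a) (EuclideanSpace.single (0 : Fin 1) b)
      = |a - b| := by
  rw [EuclideanSpace.dist_eq]
  simp [EuclideanSpace.single_apply, Real.dist_eq, Real.sqrt_sq_eq_abs]

lemma key_realize {V : Type} (G : SimpleGraph V) (hG : G.IsTree)
    (d : Sym2 V → ℝ) (h0 : ∀ e ∈ G.edgeSet, 0 ≤ d e) :
    ∃ f : V → EuclideanSpace ℝ (Fin 1), IsRealization G d 1 f := by
  classical
  have hne : Nonempty V := hG.isConnected.nonempty
  obtain ⟨r⟩ := hne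
  choose P hPpath hPuniq using fun v => hG.existsUnique_path r v
  -- key lemma
  have key : ∀ u v : V, G.Adj u v →
      wgt d (P v) = wgt d (P u) + d s(u, v) ∨ wgt d (P u) = wgt d (P v) + d s(u, v) := by
    intro u v huv
    by_cases hv : v ∈ (P u).support
    · right
      have hq : ((P u).takeUntil v hv).IsPath := (hPpath u).takeUntil hv
      have hdrop : ((P u).dropUntil v hv).IsPath := (hPpath u).dropUntil hv
      -- the unique path from v to u is the single edge
      have hsingle : (SimpleGraph.Walk.cons huv.symm SimpleGraph.Walk.nil : G.Walk v u).IsPath :=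
        SimpleGraph.Walk.IsPath.cons (SimpleGraph.Walk.isPath_iff_eq_nil |>.mpr rfl) (by simp [huv.ne'])
      obtain ⟨q, hq', huniq⟩ := hG.existsUnique_path v u
      have h1 : (P u).dropUntil v hv = SimpleGraph.Walk.cons huv.symm SimpleGraph.Walk.nil :=
        (huniq _ hdrop).trans (huniq _ hsingle).symm
      have h2 : P v = (P u).takeUntil v hv := (hPuniq v _ hq).symm
      have h3 := SimpleGraph.Walk.take_spec (P u) hv
      have h4 := wgt_append d ((P u).takeUntil v hv) ((P u).dropUntil v hv)
      rw [h3] at h4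
      rw [h4, h1, h2]
      simp [wgt, Sym2.eq_swap]
    · left
      have hconc : ((P u).concat huv).IsPath := isPath_concat (hPpath u) huv hv
      have h1 : P v = (P u).concat huv := (hPuniq v _ hconc).symm
      rw [h1]
      simp [wgt, SimpleGraph.Walk.edges_concat]
  -- define the realization
  refine ⟨fun v => EuclideanSpace.single (0 : Fin 1) (wgt d (P v)), ?_⟩
  intro u v huv
  have hd : 0 ≤ d s(u, v) := h0 _ huv
  rw [dist_single₁]
  rcases key u v huv with h | h
  · rw [h]; rw [abs_sub_comm]; simp [abs_of_nonneg hd]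
  · rw [h]; simp [abs_of_nonneg hd]

/-- every finite tree is 1-realizable; in fact every nonnegative
edge-length assignment on a finite tree has a realization on the real line. -/
theorem tree_oneRealizable {V : Type} [Fintype V] (G : SimpleGraph V) (hG : G.IsTree) :
    DRealizable G 1 ∧
    ∀ d : Sym2 V → ℝ, (∀ e ∈ G.edgeSet, 0 ≤ d e) →
      ∃ f : V → EuclideanSpace ℝ (Fin 1), IsRealization G d 1 f := by
  refine ⟨fun d h0 _ => key_realize G hG d h0, fun d h0 => key_realize G hG d h0⟩
end

section
/- The complete tripartite graph K_{2,2,2} (the octahedron graph, with three parts of size two) is not 3-realizable: there exists a Euclidean realizable edge-length assignment on K_{2,2,2} that has no realization in ℝ³. -/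
/-- The complete tripartite graph `K_{2,2,2}` (the octahedron): six vertices in three
pairs, two vertices adjacent iff they lie in different pairs. -/
def K222 : SimpleGraph (Fin 3 × Fin 2) where
  Adj p q := p.1 ≠ q.1
  symm := ⟨fun _ _ h => Ne.symm h⟩
  loopless := ⟨fun _ h => h rfl⟩

/-! ### Auxiliary constructions -/

/-- An explicit configuration of the six vertices of `K222` in `ℝ⁴`. -/
noncomputable def oct4 : Fin 3 × Fin 2 → EuclideanSpace ℝ (Fin 4) := fun p =>
  (WithLp.equiv 2 (Fin 4 → ℝ)).symm
    (![![![4, 2, 1, 3], ![-2, 2, 1, 3]],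
       ![![1, 5, 1, 0], ![1, -1, 1, 0]],
       ![![-2, -4, 1, -3], ![-2, -4, -5, -3]]] p.1 p.2)

/-- The corresponding edge-length assignment. -/
noncomputable def dK : Sym2 (Fin 3 × Fin 2) → ℝ :=
  Sym2.lift ⟨fun p q => dist (oct4 p) (oct4 q), fun p q => dist_comm _ _⟩

lemma dK_mk (p q : Fin 3 × Fin 2) : dK s(p, q) = dist (oct4 p) (oct4 q) := rfl

lemma dK_nonneg : ∀ e, 0 ≤ dK e := by
  intro e
  induction e using Sym2.ind with
  | _ p q => rw [dK_mk]; exact dist_nonneg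

lemma dK_realizable : EuclideanRealizable K222 dK :=
  ⟨4, by norm_num, oct4, fun u v _ => (dK_mk u v).symm⟩

lemma adjK {p q : Fin 3 × Fin 2} (h : p.1 ≠ q.1) : K222.Adj p q := h

lemma dist_sq3 (x y : EuclideanSpace ℝ (Fin 3)) :
    dist x y ^ 2 = (x 0 - y 0) ^ 2 + (x 1 - y 1) ^ 2 + (x 2 - y 2) ^ 2 := by
  rw [EuclideanSpace.dist_eq, Real.sq_sqrt (by positivity)]
  rw [Fin.sum_univ_three]
  simp [Real.dist_eq, sq_abs]

lemma dist_sq4 (x y : EuclideanSpace ℝ (Fin 4)) :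
    dist x y ^ 2 = (x 0 - y 0) ^ 2 + (x 1 - y 1) ^ 2 + (x 2 - y 2) ^ 2 + (x 3 - y 3) ^ 2 := by
  rw [EuclideanSpace.dist_eq, Real.sq_sqrt (by positivity)]
  rw [Fin.sum_univ_four]
  simp [Real.dist_eq, sq_abs]

/-- Four pairwise orthogonal vectors of norm `6` cannot exist in `ℝ³` (scalar form). -/
lemma four_orth_scalar
    (u0 u1 u2 v0 v1 v2 w0 w1 w2 d0 d1 d2 : ℝ)
    (huu : u0 ^ 2 + u1 ^ 2 + u2 ^ 2 = 36)
    (hvv : v0 ^ 2 + v1 ^ 2 + v2 ^ 2 = 36)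
    (hww : w0 ^ 2 + w1 ^ 2 + w2 ^ 2 = 36)
    (hdd : d0 ^ 2 + d1 ^ 2 + d2 ^ 2 = 36)
    (huv : u0 * v0 + u1 * v1 + u2 * v2 = 0)
    (huw : u0 * w0 + u1 * w1 + u2 * w2 = 0)
    (hvw : v0 * w0 + v1 * w1 + v2 * w2 = 0)
    (hud : u0 * d0 + u1 * d1 + u2 * d2 = 0)
    (hvd : v0 * d0 + v1 * d1 + v2 * d2 = 0)
    (hwd : w0 * d0 + w1 * d1 + w2 * d2 = 0) : False := by
  set Δ : ℝ := u0 * (v1 * w2 - v2 * w1) - u1 * (v0 * w2 - v2 * w0) + u2 * (v0 * w1 - v1 * w0)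
    with hΔ
  have hdet2 : Δ ^ 2 = 46656 := by
    rw [hΔ]
    linear_combination ((v0 ^ 2 + v1 ^ 2 + v2 ^ 2) * (w0 ^ 2 + w1 ^ 2 + w2 ^ 2)) * huu
      + (36 * (w0 ^ 2 + w1 ^ 2 + w2 ^ 2)) * hvv + (1296 : ℝ) * hww
      - ((w0 ^ 2 + w1 ^ 2 + w2 ^ 2) * (u0 * v0 + u1 * v1 + u2 * v2)) * huv
      - ((v0 ^ 2 + v1 ^ 2 + v2 ^ 2) * (u0 * w0 + u1 * w1 + u2 * w2)) * huw
      - ((u0 ^ 2 + u1 ^ 2 + u2 ^ 2) * (v0 * w0 + v1 * w1 + v2 * w2)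
          - 2 * (u0 * v0 + u1 * v1 + u2 * v2) * (u0 * w0 + u1 * w1 + u2 * w2)) * hvw
  have h1 : Δ * d0 = 0 := by
    rw [hΔ]
    linear_combination (v1 * w2 - v2 * w1) * hud - (u1 * w2 - u2 * w1) * hvd
      + (u1 * v2 - u2 * v1) * hwd
  have h2 : Δ * d1 = 0 := by
    rw [hΔ]
    linear_combination (-(v0 * w2 - v2 * w0)) * hud + (u0 * w2 - u2 * w0) * hvd
      - (u0 * v2 - u2 * v0) * hwd
  have h3 : Δ * d2 = 0 := by
    rw [hΔ]
    linear_combination (v0 * w1 - v1 * w0) * hud - (u0 * w1 - u1 * w0) * hvd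
      + (u0 * v1 - u1 * v0) * hwd
  have hz : Δ ^ 2 * 36 = 0 := by
    linear_combination (-Δ ^ 2) * hdd + (Δ * d0) * h1 + (Δ * d1) * h2 + (Δ * d2) * h3
  rw [hdet2] at hz
  norm_num at hz

lemma sum_sq_eq_zero {x y z : ℝ} (h : x ^ 2 + y ^ 2 + z ^ 2 = 0) :
    x = 0 ∧ y = 0 ∧ z = 0 := by
  have hx : x ^ 2 ≤ 0 := by nlinarith [sq_nonneg y, sq_nonneg z]
  have hy : y ^ 2 ≤ 0 := by nlinarith [sq_nonneg x, sq_nonneg z]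
  have hz : z ^ 2 ≤ 0 := by nlinarith [sq_nonneg x, sq_nonneg y]
  exact ⟨sq_eq_zero_iff.mp (le_antisymm hx (sq_nonneg _)),
    sq_eq_zero_iff.mp (le_antisymm hy (sq_nonneg _)),
    sq_eq_zero_iff.mp (le_antisymm hz (sq_nonneg _))⟩

set_option maxHeartbeats 4000000 in
/-- The configuration `oct4` admits no realization in `ℝ³`. -/
lemma no3D : ¬ ∃ f : Fin 3 × Fin 2 → EuclideanSpace ℝ (Fin 3), IsRealization K222 dK 3 f := by
  rintro ⟨f, hf⟩
  have key : ∀ p q : Fin 3 × Fin 2, K222.Adj p q →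
      (f p 0 - f q 0) ^ 2 + (f p 1 - f q 1) ^ 2 + (f p 2 - f q 2) ^ 2
        = dist (oct4 p) (oct4 q) ^ 2 := by
    intro p q h
    rw [← dist_sq3, hf p q h, dK_mk]
  have dval : ∀ p q : Fin 3 × Fin 2, dist (oct4 p) (oct4 q) ^ 2
      = (oct4 p 0 - oct4 q 0) ^ 2 + (oct4 p 1 - oct4 q 1) ^ 2 + (oct4 p 2 - oct4 q 2) ^ 2
        + (oct4 p 3 - oct4 q 3) ^ 2 := fun p q => dist_sq4 _ _
  -- the 12 edge equations
  have E1 : (f (0,0) 0 - f (1,0) 0) ^ 2 + (f (0,0) 1 - f (1,0) 1) ^ 2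
      + (f (0,0) 2 - f (1,0) 2) ^ 2 = 27 := by
    rw [key (0,0) (1,0) (adjK (by decide)), dval]; norm_num [oct4, WithLp.equiv_symm_apply, PiLp.toLp_apply, Matrix.cons_val_zero, Matrix.cons_val_one, Matrix.head_cons, Matrix.cons_val_two, Matrix.cons_val_three, Matrix.vecHead, Matrix.vecTail]
  have E2 : (f (0,0) 0 - f (1,1) 0) ^ 2 + (f (0,0) 1 - f (1,1) 1) ^ 2
      + (f (0,0) 2 - f (1,1) 2) ^ 2 = 27 := by
    rw [key (0,0) (1,1) (adjK (by decide)), dval]; norm_num [oct4, WithLp.equiv_symm_apply, PiLp.toLp_apply, Matrix.cons_val_zero, Matrix.cons_val_one, Matrix.head_cons, Matrix.cons_val_two, Matrix.cons_val_three, Matrix.vecHead, Matrix.vecTail]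
  have E3 : (f (0,1) 0 - f (1,0) 0) ^ 2 + (f (0,1) 1 - f (1,0) 1) ^ 2
      + (f (0,1) 2 - f (1,0) 2) ^ 2 = 27 := by
    rw [key (0,1) (1,0) (adjK (by decide)), dval]; norm_num [oct4, WithLp.equiv_symm_apply, PiLp.toLp_apply, Matrix.cons_val_zero, Matrix.cons_val_one, Matrix.head_cons, Matrix.cons_val_two, Matrix.cons_val_three, Matrix.vecHead, Matrix.vecTail]
  have E4 : (f (0,1) 0 - f (1,1) 0) ^ 2 + (f (0,1) 1 - f (1,1) 1) ^ 2
      + (f (0,1) 2 - f (1,1) 2) ^ 2 = 27 := by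
    rw [key (0,1) (1,1) (adjK (by decide)), dval]; norm_num [oct4, WithLp.equiv_symm_apply, PiLp.toLp_apply, Matrix.cons_val_zero, Matrix.cons_val_one, Matrix.head_cons, Matrix.cons_val_two, Matrix.cons_val_three, Matrix.vecHead, Matrix.vecTail]
  have E5 : (f (0,0) 0 - f (2,0) 0) ^ 2 + (f (0,0) 1 - f (2,0) 1) ^ 2
      + (f (0,0) 2 - f (2,0) 2) ^ 2 = 108 := by
    rw [key (0,0) (2,0) (adjK (by decide)), dval]; norm_num [oct4, WithLp.equiv_symm_apply, PiLp.toLp_apply, Matrix.cons_val_zero, Matrix.cons_val_one, Matrix.head_cons, Matrix.cons_val_two, Matrix.cons_val_three, Matrix.vecHead, Matrix.vecTail]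
  have E6 : (f (0,0) 0 - f (2,1) 0) ^ 2 + (f (0,0) 1 - f (2,1) 1) ^ 2
      + (f (0,0) 2 - f (2,1) 2) ^ 2 = 144 := by
    rw [key (0,0) (2,1) (adjK (by decide)), dval]; norm_num [oct4, WithLp.equiv_symm_apply, PiLp.toLp_apply, Matrix.cons_val_zero, Matrix.cons_val_one, Matrix.head_cons, Matrix.cons_val_two, Matrix.cons_val_three, Matrix.vecHead, Matrix.vecTail]
  have E7 : (f (0,1) 0 - f (2,0) 0) ^ 2 + (f (0,1) 1 - f (2,0) 1) ^ 2
      + (f (0,1) 2 - f (2,0) 2) ^ 2 = 72 := by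
    rw [key (0,1) (2,0) (adjK (by decide)), dval]; norm_num [oct4, WithLp.equiv_symm_apply, PiLp.toLp_apply, Matrix.cons_val_zero, Matrix.cons_val_one, Matrix.head_cons, Matrix.cons_val_two, Matrix.cons_val_three, Matrix.vecHead, Matrix.vecTail]
  have E8 : (f (0,1) 0 - f (2,1) 0) ^ 2 + (f (0,1) 1 - f (2,1) 1) ^ 2
      + (f (0,1) 2 - f (2,1) 2) ^ 2 = 108 := by
    rw [key (0,1) (2,1) (adjK (by decide)), dval]; norm_num [oct4, WithLp.equiv_symm_apply, PiLp.toLp_apply, Matrix.cons_val_zero, Matrix.cons_val_one, Matrix.head_cons, Matrix.cons_val_two, Matrix.cons_val_three, Matrix.vecHead, Matrix.vecTail]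
  have E9 : (f (1,0) 0 - f (2,0) 0) ^ 2 + (f (1,0) 1 - f (2,0) 1) ^ 2
      + (f (1,0) 2 - f (2,0) 2) ^ 2 = 99 := by
    rw [key (1,0) (2,0) (adjK (by decide)), dval]; norm_num [oct4, WithLp.equiv_symm_apply, PiLp.toLp_apply, Matrix.cons_val_zero, Matrix.cons_val_one, Matrix.head_cons, Matrix.cons_val_two, Matrix.cons_val_three, Matrix.vecHead, Matrix.vecTail]
  have E10 : (f (1,0) 0 - f (2,1) 0) ^ 2 + (f (1,0) 1 - f (2,1) 1) ^ 2
      + (f (1,0) 2 - f (2,1) 2) ^ 2 = 135 := by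
    rw [key (1,0) (2,1) (adjK (by decide)), dval]; norm_num [oct4, WithLp.equiv_symm_apply, PiLp.toLp_apply, Matrix.cons_val_zero, Matrix.cons_val_one, Matrix.head_cons, Matrix.cons_val_two, Matrix.cons_val_three, Matrix.vecHead, Matrix.vecTail]
  have E11 : (f (1,1) 0 - f (2,0) 0) ^ 2 + (f (1,1) 1 - f (2,0) 1) ^ 2
      + (f (1,1) 2 - f (2,0) 2) ^ 2 = 27 := by
    rw [key (1,1) (2,0) (adjK (by decide)), dval]; norm_num [oct4, WithLp.equiv_symm_apply, PiLp.toLp_apply, Matrix.cons_val_zero, Matrix.cons_val_one, Matrix.head_cons, Matrix.cons_val_two, Matrix.cons_val_three, Matrix.vecHead, Matrix.vecTail]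
  have E12 : (f (1,1) 0 - f (2,1) 0) ^ 2 + (f (1,1) 1 - f (2,1) 1) ^ 2
      + (f (1,1) 2 - f (2,1) 2) ^ 2 = 63 := by
    rw [key (1,1) (2,1) (adjK (by decide)), dval]; norm_num [oct4, WithLp.equiv_symm_apply, PiLp.toLp_apply, Matrix.cons_val_zero, Matrix.cons_val_one, Matrix.head_cons, Matrix.cons_val_two, Matrix.cons_val_three, Matrix.vecHead, Matrix.vecTail]
  -- triangle-equality degeneracy: f(0,0) - 2 f(1,1) + f(2,0) = 0
  have hs : (f (0,0) 0 - 2 * f (1,1) 0 + f (2,0) 0) ^ 2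
      + (f (0,0) 1 - 2 * f (1,1) 1 + f (2,0) 1) ^ 2
      + (f (0,0) 2 - 2 * f (1,1) 2 + f (2,0) 2) ^ 2 = 0 := by
    linear_combination 2 * E2 + 2 * E11 - E5
  obtain ⟨h0, h1, h2⟩ := sum_sq_eq_zero hs
  -- the four forced orthogonal vectors
  apply four_orth_scalar
    (f (0,0) 0 - f (0,1) 0) (f (0,0) 1 - f (0,1) 1) (f (0,0) 2 - f (0,1) 2)
    (f (1,0) 0 - f (1,1) 0) (f (1,0) 1 - f (1,1) 1) (f (1,0) 2 - f (1,1) 2)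
    (f (2,0) 0 - f (2,1) 0) (f (2,0) 1 - f (2,1) 1) (f (2,0) 2 - f (2,1) 2)
    (f (0,0) 0 + f (0,1) 0 - f (1,0) 0 - f (1,1) 0)
    (f (0,0) 1 + f (0,1) 1 - f (1,0) 1 - f (1,1) 1)
    (f (0,0) 2 + f (0,1) 2 - f (1,0) 2 - f (1,1) 2)
  · -- ‖u‖² = 36
    linear_combination 2 * E2 + 2 * E4 - E7
      + (-(f (0,0) 0) - 2 * f (0,1) 0 + 2 * f (1,1) 0 + f (2,0) 0) * h0
      + (-(f (0,0) 1) - 2 * f (0,1) 1 + 2 * f (1,1) 1 + f (2,0) 1) * h1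
      + (-(f (0,0) 2) - 2 * f (0,1) 2 + 2 * f (1,1) 2 + f (2,0) 2) * h2
  · -- ‖v‖² = 36
    linear_combination (1/2) * E1 - E2 + (1/2) * E9
      + ((1/2) * f (0,0) 0 + f (1,0) 0 - f (1,1) 0 - (1/2) * f (2,0) 0) * h0
      + ((1/2) * f (0,0) 1 + f (1,0) 1 - f (1,1) 1 - (1/2) * f (2,0) 1) * h1
      + ((1/2) * f (0,0) 2 + f (1,0) 2 - f (1,1) 2 - (1/2) * f (2,0) 2) * h2
  · -- ‖w‖² = 36
    linear_combination 2 * E2 - E6 + 2 * E12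
      + (-(f (0,0) 0) + 2 * f (1,1) 0 + f (2,0) 0 - 2 * f (2,1) 0) * h0
      + (-(f (0,0) 1) + 2 * f (1,1) 1 + f (2,0) 1 - 2 * f (2,1) 1) * h1
      + (-(f (0,0) 2) + 2 * f (1,1) 2 + f (2,0) 2 - 2 * f (2,1) 2) * h2
  · -- ‖d₁‖² = 36
    linear_combination (1/2) * E1 + E3 - E4 + E7 - (1/2) * E9
      + ((1/2) * f (0,0) 0 + 2 * f (0,1) 0 - f (1,0) 0 - f (1,1) 0 - (1/2) * f (2,0) 0) * h0
      + ((1/2) * f (0,0) 1 + 2 * f (0,1) 1 - f (1,0) 1 - f (1,1) 1 - (1/2) * f (2,0) 1) * h1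
      + ((1/2) * f (0,0) 2 + 2 * f (0,1) 2 - f (1,0) 2 - f (1,1) 2 - (1/2) * f (2,0) 2) * h2
  · -- ⟪u,v⟫ = 0
    linear_combination (-(1:ℝ)/2) * E1 + (1/2) * E2 + (1/2) * E3 - (1/2) * E4
  · -- ⟪u,w⟫ = 0
    linear_combination (-(2:ℝ)) * E2 + (1/2) * E6 + (1/2) * E7 - (1/2) * E8
      + ((3/2) * f (0,0) 0 - f (1,1) 0 - (1/2) * f (2,0) 0) * h0
      + ((3/2) * f (0,0) 1 - f (1,1) 1 - (1/2) * f (2,0) 1) * h1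
      + ((3/2) * f (0,0) 2 - f (1,1) 2 - (1/2) * f (2,0) 2) * h2
  · -- ⟪v,w⟫ = 0
    linear_combination (1/2) * E2 - (1/2) * E9 + (1/2) * E10 - (1/2) * E12
      + (-(1/2) * f (0,0) 0 + (1/2) * f (2,0) 0) * h0
      + (-(1/2) * f (0,0) 1 + (1/2) * f (2,0) 1) * h1
      + (-(1/2) * f (0,0) 2 + (1/2) * f (2,0) 2) * h2
  · -- ⟪u,d₁⟫ = 0
    linear_combination (1/2) * E1 + (1/2) * E2 - (1/2) * E3 - (1/2) * E4
  · -- ⟪v,d₁⟫ = 0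
    linear_combination (-(1:ℝ)/2) * E1 + (1/2) * E2 - (1/2) * E3 + (1/2) * E4
  · -- ⟪w,d₁⟫ = 0
    linear_combination (-(3:ℝ)/2) * E2 + (1/2) * E6 - (1/2) * E7 + (1/2) * E8
      + (1/2) * E9 - (1/2) * E10 - (1/2) * E12
      + (f (0,0) 0 - f (1,1) 0) * h0
      + (f (0,0) 1 - f (1,1) 1) * h1
      + (f (0,0) 2 - f (1,1) 2) * h2

/-- `K_{2,2,2}` is not 3-realizable: there is a Euclidean realizable
nonnegative edge-length assignment on it with no realization in `ℝ³`. -/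
theorem K222_not_threeRealizable :
    ¬ DRealizable K222 3 ∧
    ∃ d : Sym2 (Fin 3 × Fin 2) → ℝ, (∀ e ∈ K222.edgeSet, 0 ≤ d e) ∧
      EuclideanRealizable K222 d ∧
      ¬ ∃ f : Fin 3 × Fin 2 → EuclideanSpace ℝ (Fin 3), IsRealization K222 d 3 f := by
  constructor
  · intro hD
    exact no3D (hD dK (fun e _ => dK_nonneg e) dK_realizable)
  · exact ⟨dK, fun e _ => dK_nonneg e, dK_realizable, no3D⟩
end

section
/- Let k ≥ 1 and let r₁, …, r_k ≥ 0. The set of real numbers ℓ ≥ 0 for which there exist points v₀, v₁, …, v_k ∈ ℝ³ with ‖v_{i−1} − v_i‖ = r_i for i = 1, …, k and ‖v₀ − v_k‖ = ℓ is exactly the closed interval [max(0, 2·max_i r_i − Σ_i r_i), Σ_i r_i]. In particular, the Cayley configuration space of the end-to-end distance of a path graph with fixed edge lengths is an interval, hence convex. -/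
open Complex in
lemma chain_complex : ∀ (n : ℕ) (r : Fin n → ℝ), (∀ i, 0 ≤ r i) → ∀ ℓ : ℝ, 0 ≤ ℓ →
    ℓ ≤ ∑ i, r i → (∀ j, 2 * r j - ∑ i, r i ≤ ℓ) →
    ∃ w : Fin n → ℂ, (∀ i, ‖w i‖ = r i) ∧ ∑ i, w i = (ℓ : ℂ) := by
  intro n
  induction n with
  | zero =>
    intro r hr ℓ h0 hS hM
    refine ⟨fun i => 0, fun i => i.elim0, ?_⟩
    simp only [Finset.univ_eq_empty, Finset.sum_empty] at hS ⊢
    have : ℓ = 0 := le_antisymm hS h0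
    simp [this]
  | succ n ih =>
    intro r hr ℓ h0 hS hM
    set S := ∑ i, r i with hSdef
    set rn := r (Fin.last n) with hrn
    set r' : Fin n → ℝ := fun i => r i.castSucc with hr'
    have hsplit : S = (∑ i, r' i) + rn := by
      rw [hSdef, Fin.sum_univ_castSucc]
    set S' := ∑ i, r' i with hS'def
    have hS'nn : 0 ≤ S' := Finset.sum_nonneg fun i _ => hr _
    have hrnnn : 0 ≤ rn := hr _
    have hMn : 2 * rn - S ≤ ℓ := hM (Fin.last n)
    set x := min S' (ℓ + rn) with hx
    have hx0 : 0 ≤ x := le_min hS'nn (by linarith)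
    have hxS' : x ≤ S' := min_le_left _ _
    have hxlr : x ≤ ℓ + rn := min_le_right _ _
    have hxge1 : ℓ - rn ≤ x := le_min (by linarith) (by linarith)
    have hxge2 : rn - ℓ ≤ x := le_min (by linarith) (by linarith)
    have hM' : ∀ j : Fin n, 2 * r' j - S' ≤ x := by
      intro j
      have h1 : 2 * r j.castSucc - S ≤ ℓ := hM j.castSucc
      have h2 : r' j ≤ S' := Finset.single_le_sum (fun i _ => hr _) (Finset.mem_univ j)
      exact le_min (by linarith) (by simp only [hr'] at *; linarith)
    obtain ⟨w', hw'abs, hw'sum⟩ := ih r' (fun i => hr _) x hx0 hxS' hM'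
    -- IVT to find the angle of the last link
    have hcont : Continuous fun t : ℝ => ‖(x : ℂ) + rn * Complex.exp (t * I)‖ := by
      exact continuous_norm.comp (continuous_const.add (continuous_const.mul
        (Complex.continuous_exp.comp (Complex.continuous_ofReal.mul continuous_const))))
    have hf0 : ‖(x : ℂ) + rn * Complex.exp ((0:ℝ) * I)‖ = x + rn := by
      rw [show ((0:ℝ):ℂ) * I = 0 by simp, Complex.exp_zero, mul_one,
        show (x : ℂ) + (rn : ℂ) = ((x + rn : ℝ) : ℂ) by push_cast; ring,
        Complex.norm_real, Real.norm_eq_abs]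
      exact _root_.abs_of_nonneg (by linarith)
    have hfpi : ‖(x : ℂ) + rn * Complex.exp ((Real.pi:ℝ) * I)‖ = |x - rn| := by
      rw [Complex.exp_pi_mul_I]
      rw [show (x : ℂ) + rn * (-1) = ((x - rn : ℝ) : ℂ) by push_cast; ring]
      rw [Complex.norm_real, Real.norm_eq_abs]
    have hmem : ℓ ∈ Set.Icc (‖(x : ℂ) + rn * Complex.exp ((Real.pi:ℝ) * I)‖)
        (‖(x : ℂ) + rn * Complex.exp ((0:ℝ) * I)‖) := by
      rw [hf0, hfpi]
      constructor
      · rw [abs_sub_le_iff]; constructor <;> linarith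
      · linarith
    have := intermediate_value_Icc' (le_of_lt Real.pi_pos) hcont.continuousOn hmem
    obtain ⟨t, ht, hft⟩ := this
    set z : ℂ := (rn : ℂ) * Complex.exp (t * I) with hz
    have hzabs : ‖z‖ = rn := by
      rw [hz, norm_mul, Complex.norm_exp, Complex.norm_real, Real.norm_eq_abs, _root_.abs_of_nonneg hrnnn]
      simp
    set s : ℂ := (x : ℂ) + z with hs
    have hsabs : ‖s‖ = ℓ := hft
    set w : Fin (n+1) → ℂ := Fin.snoc w' z with hw
    have hwsum : ∑ i, w i = s := by
      rw [hw, Fin.sum_univ_castSucc]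
      simp [Fin.snoc_castSucc, Fin.snoc_last, hw'sum, hs]
    have hwabs : ∀ i, ‖w i‖ = r i := by
      intro i
      refine Fin.lastCases ?_ ?_ i
      · simp [hw, Fin.snoc_last, hzabs, hrn]
      · intro j; simp [hw, Fin.snoc_castSucc, hw'abs j, hr']
    by_cases hℓ : ℓ = 0
    · refine ⟨w, hwabs, ?_⟩
      have : s = 0 := by
        rw [← norm_eq_zero, hsabs, hℓ]
      rw [hwsum, this, hℓ]; simp
    · have hsne : s ≠ 0 := by
        intro h; apply hℓ; rw [← hsabs, h, norm_zero]
      refine ⟨fun i => (ℓ / s) * w i, ?_, ?_⟩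
      · intro i
        rw [norm_mul, norm_div, hsabs, Complex.norm_real, Real.norm_eq_abs, _root_.abs_of_nonneg h0,
          div_self hℓ, one_mul, hwabs]
      · rw [← Finset.mul_sum, hwsum, div_mul_cancel₀]
        exact hsne
noncomputable def cToE (z : ℂ) : EuclideanSpace ℝ (Fin 3) :=
  (WithLp.equiv 2 (Fin 3 → ℝ)).symm ![z.re, z.im, 0]

lemma cToE_add (z w : ℂ) : cToE (z + w) = cToE z + cToE w := by
  unfold cToE
  ext j
  fin_cases j <;> simp

lemma cToE_sum {ι : Type*} (s : Finset ι) (f : ι → ℂ) :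
    ∑ i ∈ s, cToE (f i) = cToE (∑ i ∈ s, f i) :=
  (map_sum (AddMonoidHom.mk' cToE cToE_add) f s).symm

lemma norm_cToE (z : ℂ) : ‖cToE z‖ = ‖z‖ := by
  rw [EuclideanSpace.norm_eq, Complex.norm_def, Complex.normSq_apply]
  unfold cToE
  rw [Fin.sum_univ_three]
  simp [Real.norm_eq_abs, sq_abs]
  ring_nf

/-- for a path with `k ≥ 1` fixed nonnegative edge lengths `r₁, …, r_k` in
`ℝ³`, the attainable end-to-end distances form exactly the interval
`[max(0, 2·maxᵢ rᵢ − Σᵢ rᵢ), Σᵢ rᵢ]`; in particular this Cayley configuration space is an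
interval, hence convex. -/
theorem path_cayley_space (k : ℕ) (hk : 1 ≤ k) (r : Fin k → ℝ) (hr : ∀ i, 0 ≤ r i) :
    {ℓ : ℝ | 0 ≤ ℓ ∧ ∃ v : Fin (k + 1) → EuclideanSpace ℝ (Fin 3),
        (∀ i : Fin k, dist (v i.castSucc) (v i.succ) = r i) ∧
        dist (v 0) (v (Fin.last k)) = ℓ} =
      Set.Icc
        (max 0 (2 * Finset.univ.sup' ⟨⟨0, hk⟩, Finset.mem_univ _⟩ r - ∑ i, r i))
        (∑ i, r i) ∧
    Convex ℝ {ℓ : ℝ | 0 ≤ ℓ ∧ ∃ v : Fin (k + 1) → EuclideanSpace ℝ (Fin 3),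
        (∀ i : Fin k, dist (v i.castSucc) (v i.succ) = r i) ∧
        dist (v 0) (v (Fin.last k)) = ℓ} := by
  have hS0 : 0 ≤ ∑ i, r i := Finset.sum_nonneg fun i _ => hr i
  have hset : {ℓ : ℝ | 0 ≤ ℓ ∧ ∃ v : Fin (k + 1) → EuclideanSpace ℝ (Fin 3),
        (∀ i : Fin k, dist (v i.castSucc) (v i.succ) = r i) ∧
        dist (v 0) (v (Fin.last k)) = ℓ} =
      Set.Icc
        (max 0 (2 * Finset.univ.sup' ⟨⟨0, hk⟩, Finset.mem_univ _⟩ r - ∑ i, r i))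
        (∑ i, r i) := by
    ext ℓ
    simp only [Set.mem_setOf_eq, Set.mem_Icc]
    constructor
    · rintro ⟨h0, v, hv, hd⟩
      set w : Fin k → EuclideanSpace ℝ (Fin 3) := fun i => v i.succ - v i.castSucc with hwdef
      have hwn : ∀ i, ‖w i‖ = r i := by
        intro i
        rw [hwdef]
        simp only
        rw [← dist_eq_norm, dist_comm]
        exact hv i
      set g : ℕ → EuclideanSpace ℝ (Fin 3) :=
        fun j => v ⟨min j k, by omega⟩ with hgdef
      have key : ∑ i, w i = v (Fin.last k) - v 0 := by
        have h1 : ∀ i : Fin k, w i = g (i.1 + 1) - g i.1 := by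
          intro i
          have e1 : (⟨min (i.1 + 1) k, by omega⟩ : Fin (k+1)) = i.succ := by
            ext; simp only [Fin.val_succ]; omega
          have e2 : (⟨min i.1 k, by omega⟩ : Fin (k+1)) = i.castSucc := by
            ext; simp only [Fin.coe_castSucc]; omega
          rw [hwdef, hgdef]
          simp only
          rw [e1, e2]
        calc ∑ i : Fin k, w i = ∑ i : Fin k, (g (i.1 + 1) - g i.1) :=
              Finset.sum_congr rfl fun i _ => h1 i
          _ = ∑ j ∈ Finset.range k, (g (j + 1) - g j) :=
              Fin.sum_univ_eq_sum_range (fun j => g (j + 1) - g j) k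
          _ = g k - g 0 := Finset.sum_range_sub g k
          _ = v (Fin.last k) - v 0 := by
              have e1 : (⟨min k k, by omega⟩ : Fin (k+1)) = Fin.last k := by
                ext; simp [Fin.val_last]
              have e2 : (⟨min 0 k, by omega⟩ : Fin (k+1)) = 0 := by
                ext; simp
              rw [hgdef]
              simp only
              rw [e1, e2]
      have hl : ℓ = ‖∑ i, w i‖ := by
        rw [key, ← hd, dist_eq_norm, norm_sub_rev]
      have hup : ℓ ≤ ∑ i, r i := by
        rw [hl]
        refine le_trans (norm_sum_le _ _) (le_of_eq ?_)
        exact Finset.sum_congr rfl fun i _ => hwn i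
      have hj : ∀ j, 2 * r j - ∑ i, r i ≤ ℓ := by
        intro j
        have h2 : ∑ i ∈ Finset.univ.erase j, w i + w j = ∑ i, w i :=
          Finset.sum_erase_add _ _ (Finset.mem_univ j)
        have h3 : ‖w j‖ ≤ ‖∑ i, w i‖ + ‖∑ i ∈ Finset.univ.erase j, w i‖ := by
          have he : w j = (∑ i, w i) - ∑ i ∈ Finset.univ.erase j, w i := by
            rw [← h2]; abel
          rw [he]; exact norm_sub_le _ _
        have h4 : ‖∑ i ∈ Finset.univ.erase j, w i‖ ≤ ∑ i ∈ Finset.univ.erase j, r i :=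
          le_trans (norm_sum_le _ _) (le_of_eq (Finset.sum_congr rfl fun i _ => hwn i))
        have h5 : ∑ i ∈ Finset.univ.erase j, r i + r j = ∑ i, r i :=
          Finset.sum_erase_add _ _ (Finset.mem_univ j)
        rw [hwn j, ← hl] at h3
        linarith
      refine ⟨max_le h0 ?_, hup⟩
      have hsup : Finset.univ.sup' ⟨⟨0, hk⟩, Finset.mem_univ _⟩ r ≤ (ℓ + ∑ i, r i) / 2 :=
        Finset.sup'_le _ _ fun j _ => by linarith [hj j]
      linarith
    · rintro ⟨hlo, hhi⟩
      have h0 : 0 ≤ ℓ := le_trans (le_max_left _ _) hlo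
      have hM : ∀ j, 2 * r j - ∑ i, r i ≤ ℓ := by
        intro j
        have h1 : r j ≤ Finset.univ.sup' ⟨⟨0, hk⟩, Finset.mem_univ _⟩ r :=
          Finset.le_sup' r (Finset.mem_univ j)
        have h2 : 2 * Finset.univ.sup' ⟨⟨0, hk⟩, Finset.mem_univ _⟩ r - ∑ i, r i ≤ ℓ :=
          le_trans (le_max_right _ _) hlo
        linarith
      obtain ⟨w, hwabs, hwsum⟩ := chain_complex k r hr ℓ h0 hhi hM
      refine ⟨h0, ?_⟩
      set g : ℕ → EuclideanSpace ℝ (Fin 3) :=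
        fun i => if h : i < k then cToE (w ⟨i, h⟩) else 0 with hg
      refine ⟨fun j : Fin (k + 1) => ∑ i ∈ Finset.range j.val, g i, ?_, ?_⟩
      · intro i
        have hcs : (i.castSucc).val = i.val := rfl
        have hs : (i.succ).val = i.val + 1 := rfl
        simp only [hcs, hs, Finset.sum_range_succ]
        rw [dist_self_add_right, hg]
        simp only [i.isLt, dif_pos]
        rw [norm_cToE, hwabs]
      · have hv0 : ((0 : Fin (k + 1)) : ℕ) = 0 := rfl
        have hvl : ((Fin.last k) : ℕ) = k := rfl
        simp only [hv0, hvl, Finset.range_zero, Finset.sum_empty]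
        have hsum : ∑ i ∈ Finset.range k, g i = cToE (ℓ : ℂ) := by
          rw [← hwsum, ← cToE_sum]
          rw [← Fin.sum_univ_eq_sum_range (fun j => g j) k]
          refine Finset.sum_congr rfl fun i _ => ?_
          rw [hg]
          simp only [i.isLt, dif_pos]
        rw [hsum, dist_zero_left, norm_cToE, Complex.norm_real, Real.norm_eq_abs, _root_.abs_of_nonneg h0]
  exact ⟨hset, hset ▸ convex_Icc _ _⟩
end
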